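/- The unique root in (0, 1) of the secular equation tends to 1 as n → ∞ along even integers: for every ε > 0 there exists N ∈ ℕ such that for every even integer n ≥ N and every λ ∈ (0, 1) satisfying cos(√λ·π/n)·sin(√λ·π) + 2·sin(√λ·π/n)·cos(√λ·π) = 0, one has 1 − ε < λ < 1. -/

import Mathlib

open Real

set_option maxHeartbeats 1000000 in
/-- The root in `(0, 1)` of the secular equation
`cos(√λ π/n) sin(√λ π) + 2 sin(√λ π/n) cos(√λ π) = 0` tends to `1` as `n → ∞`
along even integers. -/
theorem secular_root_tendsto_one :
    ∀ ε : ℝ, 0 < ε → ∃ N : ℕ, ∀ n : ℕ, Even n → N ≤ n →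
      ∀ lam ∈ Set.Ioo (0 : ℝ) 1,
        Real.cos (Real.sqrt lam * (Real.pi / n)) * Real.sin (Real.sqrt lam * Real.pi)
          + 2 * Real.sin (Real.sqrt lam * (Real.pi / n))
            * Real.cos (Real.sqrt lam * Real.pi) = 0 →
        1 - ε < lam ∧ lam < 1 := by
  intro ε hε
  by_cases hε1 : 1 ≤ ε
  · exact ⟨0, fun n _ _ lam hlam _ => ⟨by linarith [hlam.1], hlam.2⟩⟩
  push_neg at hε1
  have h1ε : 0 < 1 - ε := by linarith
  have hsb : Real.sqrt (1 - ε) < 1 := by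
    have := Real.sqrt_lt_sqrt h1ε.le (show 1 - ε < 1 by linarith)
    simpa using this
  set b : ℝ := Real.sqrt (1 - ε) * π with hbdef
  have hb_lt : b < π := by
    nlinarith [pi_pos]
  have hb0 : 0 ≤ b := by positivity
  set c : ℝ := 2 / π * (π - b) with hcdef
  have hcpos : 0 < c := by
    have h1 : (0:ℝ) < 2 / π := by positivity
    have h2 : (0:ℝ) < π - b := by linarith
    exact mul_pos h1 h2
  refine ⟨max 7 (⌈4 * π / c⌉₊ + 1), fun n _ hNn lam hlam heq => ?_⟩
  refine ⟨?_, hlam.2⟩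
  by_contra hle
  push_neg at hle
  have h7 : 7 ≤ n := le_trans (le_max_left _ _) hNn
  have hn7 : (7 : ℝ) ≤ (n : ℝ) := by exact_mod_cast h7
  have hnpos : (0 : ℝ) < n := by linarith
  have hceil : (⌈4 * π / c⌉₊ + 1 : ℕ) ≤ n := le_trans (le_max_right _ _) hNn
  have hcn : 4 * π / c < (n : ℝ) := by
    have h1 : (4 * π / c : ℝ) ≤ (⌈4 * π / c⌉₊ : ℝ) := Nat.le_ceil _
    have h2 : ((⌈4 * π / c⌉₊ : ℕ) : ℝ) + 1 ≤ (n : ℝ) := by exact_mod_cast hceil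
    linarith
  set s : ℝ := Real.sqrt lam with hsdef
  have hs0 : 0 < s := Real.sqrt_pos.mpr hlam.1
  have hs1 : s < 1 := by
    have := Real.sqrt_lt_sqrt hlam.1.le hlam.2
    simpa using this
  set a : ℝ := s * π with hadef
  have ha0 : 0 < a := by positivity
  have hapi : a < π := by nlinarith [pi_pos]
  have hab : a ≤ b := by
    have hs : s ≤ Real.sqrt (1 - ε) := Real.sqrt_le_sqrt hle
    nlinarith [pi_pos]
  have harg : s * (π / n) = a / n := by rw [hadef]; ring
  rw [harg] at heq
  -- basic bounds
  have hanpos : 0 < a / n := by positivity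
  have hanle : a / n ≤ π / n := by
    gcongr
  have hpin : π / n ≤ π / 3 := by
    apply div_le_div_of_nonneg_left pi_pos.le (by norm_num) (by linarith)
  have hpin_pi : π / n ≤ π := le_trans hpin (by nlinarith [pi_pos])
  have hcos_mono : Real.cos (π / n) ≤ Real.cos (a / n) :=
    Real.cos_le_cos_of_nonneg_of_le_pi hanpos.le hpin_pi hanle
  have hcos_half : (1 : ℝ) / 2 ≤ Real.cos (π / n) := by
    have := Real.cos_le_cos_of_nonneg_of_le_pi (by positivity) (by nlinarith [pi_pos]) hpin
    rw [Real.cos_pi_div_three] at this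
    linarith
  have hsin_le : Real.sin (a / n) ≤ a / n := Real.sin_le hanpos.le
  have hsin_nn : 0 ≤ Real.sin (a / n) :=
    Real.sin_nonneg_of_nonneg_of_le_pi hanpos.le (le_trans hanle hpin_pi)
  have hcos_ge : -1 ≤ Real.cos a := Real.neg_one_le_cos a
  have hsinapos : 0 < Real.sin a := Real.sin_pos_of_pos_of_lt_pi ha0 hapi
  -- F ≥ (1/2) sin a - 2 a / n
  have hstep : (1 : ℝ) / 2 * Real.sin a - 2 * (a / n) ≤
      Real.cos (a / n) * Real.sin a + 2 * Real.sin (a / n) * Real.cos a := by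
    have h1 : (1 : ℝ) / 2 * Real.sin a ≤ Real.cos (a / n) * Real.sin a := by
      apply mul_le_mul_of_nonneg_right _ hsinapos.le
      linarith
    have h2 : -(2 * (a / n)) ≤ 2 * Real.sin (a / n) * Real.cos a := by
      have h2a : 2 * Real.sin (a / n) * (-1) ≤ 2 * Real.sin (a / n) * Real.cos a :=
        mul_le_mul_of_nonneg_left hcos_ge (by positivity)
      linarith
    linarith
  have hF : 0 < Real.cos (a / n) * Real.sin a + 2 * Real.sin (a / n) * Real.cos a := by
    rcases le_or_gt a (π / 2) with hhalf | hhalf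
    · have hsin_lb : 2 / π * a ≤ Real.sin a := Real.mul_le_sin ha0.le hhalf
      have hlt : 2 / (n : ℝ) < 1 / π := by
        rw [div_lt_div_iff₀ hnpos pi_pos]
        have := pi_lt_d2
        linarith
      have key : 0 < 1 / 2 * Real.sin a - 2 * (a / n) := by
        have e1 : 2 * (a / n) = a * (2 / n) := by ring
        have e2 : (1 : ℝ) / 2 * (2 / π * a) = a * (1 / π) := by ring
        have e3 : a * (1 / π - 2 / n) = a * (1 / π) - a * (2 / n) := by ring
        have e4 : 0 < a * (1 / π - 2 / n) := mul_pos ha0 (by linarith)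
        linarith
      linarith
    · have hsin_lb : c ≤ Real.sin a := by
        have h1 : 2 / π * (π - a) ≤ Real.sin (π - a) :=
          Real.mul_le_sin (by linarith) (by linarith)
        rw [Real.sin_pi_sub] at h1
        have h2 : c ≤ 2 / π * (π - a) := by
          apply mul_le_mul_of_nonneg_left (by linarith) (by positivity)
        linarith
      have h4 : 4 * π < c * n := by
        rw [div_lt_iff₀ hcpos] at hcn; linarith
      have h5 : 2 * (π / n) < c / 2 := by
        rw [show 2 * (π / n) = 2 * π / n by ring,
          div_lt_div_iff₀ hnpos (by norm_num : (0:ℝ) < 2)]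
        nlinarith
      have h6 : 2 * (a / n) < c / 2 := by linarith
      linarith
  linarith [heq, hF]
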